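/- Let a₀, b₀, ψ₀, ρ ∈ ℝ with a₀, b₀ ≥ 0, ψ₀ > 0, T > 0, and ρ > a₀² + 2b₀ + 2ψ₀/T. Let ψ : [0,T] → [0, +∞) be absolutely continuous with ψ(0) = ψ₀ and ψ'(t) + ρ ≤ a₀ ρ^{1/2} + b₀ for a.e. t ∈ {t ∈ (0,T) : ψ(t) > 0}. Then there exists T* ∈ (0,T) with T* ≤ 2ψ₀/(ρ − a₀² − 2b₀) such that ψ is strictly decreasing on (0, T*) and ψ vanishes on [T*, T]. -/

import Mathlib

open MeasureTheory intervalIntegral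

/-- sliding-mode lemma, positive case.  If `ψ : [0,T] → [0,∞)` is
absolutely continuous (written with an integrable a.e.-derivative `g`), `ψ(0) = ψ₀ > 0`,
`ρ > a₀² + 2b₀ + 2ψ₀/T`, and `g + ρ ≤ a₀ √ρ + b₀` a.e. on `{t ∈ (0,T) : ψ t > 0}`,
then there exists `T* ∈ (0,T)` with `T* ≤ 2ψ₀/(ρ − a₀² − 2b₀)` such that `ψ` is
strictly decreasing on `(0, T*)` and vanishes on `[T*, T]`. -/
theorem sliding_mode_lemma_positive_case
    (T a₀ b₀ ψ₀ ρ : ℝ) (hT : 0 < T)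
    (ha₀ : 0 ≤ a₀) (hb₀ : 0 ≤ b₀) (hψ₀ : 0 < ψ₀)
    (hρ : a₀ ^ 2 + 2 * b₀ + 2 * ψ₀ / T < ρ)
    (ψ g : ℝ → ℝ)
    (hnonneg : ∀ t ∈ Set.Icc 0 T, 0 ≤ ψ t)
    (hint : IntervalIntegrable g volume 0 T)
    (hAC : ∀ t ∈ Set.Icc 0 T, ψ t = ψ 0 + ∫ s in (0:ℝ)..t, g s)
    (hψ0 : ψ 0 = ψ₀)
    (hineq : ∀ᵐ t ∂(volume.restrict {t : ℝ | t ∈ Set.Ioo 0 T ∧ 0 < ψ t}),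
      g t + ρ ≤ a₀ * Real.sqrt ρ + b₀) :
    ∃ Tstar ∈ Set.Ioo 0 T, Tstar ≤ 2 * ψ₀ / (ρ - a₀ ^ 2 - 2 * b₀) ∧
      StrictAntiOn ψ (Set.Ioo 0 Tstar) ∧ ∀ t ∈ Set.Icc Tstar T, ψ t = 0 := by
  set A : Set ℝ := {t : ℝ | t ∈ Set.Ioo 0 T ∧ 0 < ψ t} with hA
  set c : ℝ := ρ - (a₀ * Real.sqrt ρ + b₀) with hcdef
  have hψ₀T : 0 < 2 * ψ₀ / T := by positivity
  have hρpos : 0 < ρ := by nlinarith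
  have hsq : Real.sqrt ρ ^ 2 = ρ := Real.sq_sqrt hρpos.le
  have hΔ : 0 < ρ - a₀ ^ 2 - 2 * b₀ := by linarith
  have hc2 : (ρ - a₀ ^ 2 - 2 * b₀) / 2 ≤ c := by
    nlinarith [sq_nonneg (a₀ - Real.sqrt ρ)]
  have hcψT : ψ₀ / T < c := by
    have h1 : 2 * ψ₀ / T = 2 * (ψ₀ / T) := by ring
    rw [h1] at hρ
    linarith
  have hcpos : 0 < c := lt_trans (div_pos hψ₀ hT) hcψT
  have hg_ae : ∀ᵐ u ∂volume.restrict A, g u ≤ -c := by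
    filter_upwards [hineq] with u hu
    simp only [hcdef]
    linarith
  -- integrability on subintervals
  have hii : ∀ s t : ℝ, 0 ≤ s → s ≤ t → t ≤ T → IntervalIntegrable g volume s t := by
    intro s t hs hst ht
    refine hint.mono_set ?_
    rw [Set.uIcc_of_le hst, Set.uIcc_of_le hT.le]
    exact Set.Icc_subset_Icc hs ht
  -- key integral estimate
  have key : ∀ s t : ℝ, 0 ≤ s → s ≤ t → t ≤ T → Set.Ioo s t ⊆ A →
      (∫ u in s..t, g u) ≤ -c * (t - s) := by
    intro s t hs hst ht hsub
    have h1 : ∀ᵐ u ∂volume.restrict (Set.Ioc s t), g u ≤ -c := by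
      have heq : volume.restrict (Set.Ioc s t) = volume.restrict (Set.Ioo s t) :=
        (Measure.restrict_congr_set Ioo_ae_eq_Ioc).symm
      rw [heq]
      exact ae_mono (Measure.restrict_mono hsub le_rfl) hg_ae
    rw [intervalIntegral.integral_of_le hst]
    have hconst : IntegrableOn (fun _ : ℝ => -c) (Set.Ioc s t) volume :=
      integrableOn_const measure_Ioc_lt_top.ne
    calc ∫ u in Set.Ioc s t, g u ≤ ∫ _ in Set.Ioc s t, (-c) :=
          setIntegral_mono_ae_restrict (hii s t hs hst ht).1 hconst h1
      _ = -c * (t - s) := by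
          rw [setIntegral_const, measureReal_def, Real.volume_Ioc, ENNReal.toReal_ofReal (by linarith),
            smul_eq_mul]
          ring
  -- difference formula
  have hdiff : ∀ s t : ℝ, s ∈ Set.Icc 0 T → t ∈ Set.Icc 0 T → s ≤ t →
      ψ t = ψ s + ∫ u in s..t, g u := by
    intro s t hs ht hst
    rw [hAC t ht, hAC s hs]
    have := intervalIntegral.integral_add_adjacent_intervals
      (hii 0 s le_rfl hs.1 hs.2) (hii s t hs.1 hst ht.2)
    linarith
  -- continuity
  have hcont : ContinuousOn ψ (Set.Icc 0 T) := by
    have h1 : ContinuousOn (fun t => ψ 0 + ∫ u in (0:ℝ)..t, g u) (Set.Icc 0 T) := by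
      have := intervalIntegral.continuousOn_primitive_interval'
        (μ := volume) (f := g) (b₁ := 0) (b₂ := T) hint Set.left_mem_uIcc
      rw [Set.uIcc_of_le hT.le] at this
      exact continuousOn_const.add this
    exact h1.congr fun t ht => hAC t ht
  -- positivity at 0 carries: zero set
  set S : Set ℝ := {t | t ∈ Set.Icc 0 T ∧ ψ t = 0} with hS
  have hSclosed : IsClosed S :=
    hcont.preimage_isClosed_of_isClosed isClosed_Icc isClosed_singleton
  -- there is a zero before ψ₀ / c
  have ht0T : ψ₀ / c < T := by
    rw [div_lt_iff₀ hcpos]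
    rw [div_lt_iff₀ hT] at hcψT
    linarith [hcψT]
  have hzero : ∃ z ∈ Set.Icc 0 (ψ₀ / c), ψ z = 0 := by
    by_contra hcon
    push_neg at hcon
    have ht0 : (0:ℝ) ≤ ψ₀ / c := le_of_lt (div_pos hψ₀ hcpos)
    have hpos : ∀ u ∈ Set.Icc 0 (ψ₀ / c), 0 < ψ u := fun u hu =>
      lt_of_le_of_ne (hnonneg u ⟨hu.1, le_trans hu.2 ht0T.le⟩) (Ne.symm (hcon u hu))
    have hsub : Set.Ioo 0 (ψ₀ / c) ⊆ A := fun u hu =>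
      ⟨⟨hu.1, lt_trans hu.2 ht0T⟩, hpos u ⟨hu.1.le, hu.2.le⟩⟩
    have := key 0 (ψ₀ / c) le_rfl ht0 ht0T.le hsub
    have hval := hdiff 0 (ψ₀ / c) ⟨le_rfl, hT.le⟩ ⟨ht0, ht0T.le⟩ ht0
    have : ψ (ψ₀ / c) ≤ 0 := by
      rw [hval, hψ0]
      have hcc : -c * (ψ₀ / c - 0) = -ψ₀ := by
        field_simp
        ring
      linarith [this]
    exact absurd this (not_le.2 (hpos _ ⟨ht0, le_rfl⟩))
  obtain ⟨z, hz, hzz⟩ := hzero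
  have hzS : z ∈ S := ⟨⟨hz.1, le_trans hz.2 ht0T.le⟩, hzz⟩
  have hSne : S.Nonempty := ⟨z, hzS⟩
  have hSbdd : BddBelow S := ⟨0, fun u hu => hu.1.1⟩
  set Tstar := sInf S with hTs
  have hTsmem : Tstar ∈ S := hSclosed.csInf_mem hSne hSbdd
  have hTsle : Tstar ≤ ψ₀ / c := le_trans (csInf_le hSbdd hzS) hz.2
  have hTsnonneg : 0 ≤ Tstar := hTsmem.1.1
  have hTspos : 0 < Tstar := by
    rcases lt_or_eq_of_le hTsnonneg with h | h
    · exact h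
    · exfalso
      have := hTsmem.2
      rw [← h, hψ0] at this
      linarith
  have hTsT : Tstar < T := lt_of_le_of_lt hTsle ht0T
  have h1 : Tstar * c ≤ ψ₀ := (le_div_iff₀ hcpos).1 hTsle
  have hbound : Tstar ≤ 2 * ψ₀ / (ρ - a₀ ^ 2 - 2 * b₀) := by
    rw [le_div_iff₀ hΔ]
    nlinarith
  have hposTs : ∀ u : ℝ, 0 ≤ u → u < Tstar → 0 < ψ u := by
    intro u hu hut
    have huT : u ∈ Set.Icc 0 T := ⟨hu, le_trans hut.le hTsT.le⟩
    refine lt_of_le_of_ne (hnonneg u huT) fun h => ?_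
    have : u ∈ S := ⟨huT, h.symm⟩
    exact absurd (csInf_le hSbdd this) (not_le.2 hut)
  refine ⟨Tstar, ⟨hTspos, hTsT⟩, hbound, ?_, ?_⟩
  · intro s hs t ht hst
    have hsub : Set.Ioo s t ⊆ A := fun u hu =>
      ⟨⟨lt_trans hs.1 hu.1, lt_trans (lt_trans hu.2 ht.2) hTsT⟩,
        hposTs u (le_of_lt (lt_trans hs.1 hu.1)) (lt_trans hu.2 ht.2)⟩
    have hk := key s t hs.1.le hst.le (le_trans ht.2.le hTsT.le) hsub
    have hd := hdiff s t ⟨hs.1.le, le_trans hs.2.le hTsT.le⟩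
      ⟨le_trans hs.1.le hst.le, le_trans ht.2.le hTsT.le⟩ hst.le
    nlinarith
  · intro t ht
    rcases eq_or_lt_of_le ht.1 with heq | hlt
    · rw [← heq]
      exact hTsmem.2
    · by_contra hne
      have htT : t ∈ Set.Icc 0 T := ⟨le_trans hTsnonneg ht.1, ht.2⟩
      have hψt : 0 < ψ t := lt_of_le_of_ne (hnonneg t htT) (Ne.symm hne)
      set B : Set ℝ := {u | u ∈ Set.Icc Tstar t ∧ ψ u = 0} with hB
      have hBclosed : IsClosed B :=
        (hcont.mono (Set.Icc_subset_Icc hTsnonneg ht.2)).preimage_isClosed_of_isClosed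
          isClosed_Icc isClosed_singleton
      have hBne : B.Nonempty := ⟨Tstar, ⟨le_rfl, hlt.le⟩, hTsmem.2⟩
      have hBbdd : BddAbove B := ⟨t, fun u hu => hu.1.2⟩
      set s := sSup B with hs
      have hsmem : s ∈ B := hBclosed.csSup_mem hBne hBbdd
      have hst : s < t := by
        refine lt_of_le_of_ne hsmem.1.2 fun h => ?_
        rw [h] at hsmem
        exact hne hsmem.2
      have hsub : Set.Ioo s t ⊆ A := by
        intro u hu
        have hu1 : Tstar < u := lt_of_le_of_lt hsmem.1.1 hu.1
        refine ⟨⟨lt_trans hTspos hu1, lt_of_lt_of_le hu.2 ht.2⟩, ?_⟩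
        refine lt_of_le_of_ne
          (hnonneg u ⟨le_trans hTsnonneg hu1.le, le_trans hu.2.le ht.2⟩) fun h => ?_
        have : u ∈ B := ⟨⟨hu1.le, hu.2.le⟩, h.symm⟩
        exact absurd (le_csSup hBbdd this) (not_le.2 hu.1)
      have hs0 : 0 ≤ s := le_trans hTsnonneg hsmem.1.1
      have hk := key s t hs0 hst.le ht.2 hsub
      have hd := hdiff s t ⟨hs0, le_trans hsmem.1.2 ht.2⟩ htT hst.le
      rw [hsmem.2] at hd
      nlinarith
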